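/- For every n ≥ 4, the maximum clique size of the binary qualitative independence graph QI(n,2) equals C(n−1, ⌊n/2⌋ − 1). -/

import Mathlib

set_option maxHeartbeats 1000000

open Finset
open scoped FinsetFamily

namespace QIAux

/-- There is a colex initial segment of any prescribed size. -/
lemma exists_initSeg (N j g : ℕ)
    (hg : g ≤ (Finset.powersetCard j (Finset.univ : Finset (Fin N))).card) :
    ∃ 𝒞 : Finset (Finset (Fin N)), Finset.Colex.IsInitSeg 𝒞 j ∧ 𝒞.card = g ∧
      𝒞 ⊆ Finset.powersetCard j Finset.univ := by
  induction g with
  | zero => exact ⟨∅, by simp, rfl, by simp⟩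
  | succ g ih =>
    obtain ⟨𝒞, hinit, hcard, hsub⟩ := ih (le_of_lt hg)
    have hne : (Finset.powersetCard j (Finset.univ : Finset (Fin N)) \ 𝒞).Nonempty := by
      rw [← Finset.card_pos, Finset.card_sdiff_of_subset hsub, hcard]
      omega
    obtain ⟨B, hB, hBmin⟩ := Finset.exists_min_image _ (fun B : Finset (Fin N) => toColex B) hne
    rw [Finset.mem_sdiff] at hB
    have hBj : B.card = j := (Finset.mem_powersetCard.1 hB.1).2
    refine ⟨insert B 𝒞, ⟨?_, ?_⟩, ?_, ?_⟩
    · intro A hA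
      rcases Finset.mem_insert.1 hA with rfl | hA
      · exact hBj
      · exact hinit.1 hA
    · rintro A t hA ⟨hlt, htj⟩
      have htP : t ∈ Finset.powersetCard j (Finset.univ : Finset (Fin N)) :=
        Finset.mem_powersetCard.2 ⟨Finset.subset_univ _, htj⟩
      rcases Finset.mem_insert.1 hA with rfl | hA
      · by_cases ht : t ∈ 𝒞
        · exact Finset.mem_insert_of_mem ht
        · exact absurd (hBmin t (Finset.mem_sdiff.2 ⟨htP, ht⟩)) (not_le_of_gt hlt)
      · exact Finset.mem_insert_of_mem (hinit.2 hA ⟨hlt, htj⟩)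
    · rw [Finset.card_insert_of_notMem hB.2, hcard]
    · exact Finset.insert_subset hB.1 hsub

/-- The shadow commutes with mapping along an embedding. -/
lemma shadow_image_map {α β : Type*} [DecidableEq α] [DecidableEq β] (e : α ↪ β)
    (𝒜 : Finset (Finset α)) :
    ∂ (𝒜.image (Finset.map e)) = (∂ 𝒜).image (Finset.map e) := by
  ext t
  simp only [Finset.mem_shadow_iff, Finset.mem_image]
  constructor
  · rintro ⟨s, ⟨A, hA, rfl⟩, b, hb, rfl⟩
    obtain ⟨a, ha, rfl⟩ := Finset.mem_map.1 hb
    exact ⟨A.erase a, ⟨A, hA, a, ha, rfl⟩, (Finset.map_erase e A a)⟩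
  · rintro ⟨s, ⟨A, hA, a, ha, rfl⟩, rfl⟩
    exact ⟨A.map e, ⟨A, hA, rfl⟩, e a, Finset.mem_map_of_mem _ ha, (Finset.map_erase e A a).symm⟩

/-- Local LYM relative to a ground set `s` with `#s + 1 ≤ 2 j`: families of `j`-sets inside `s`
have shadow at least as large. -/
lemma card_le_card_shadow_ground {N j : ℕ} (hj : 1 ≤ j) {s : Finset (Fin N)}
    (𝒞 : Finset (Finset (Fin N))) (hsub : ∀ A ∈ 𝒞, A ⊆ s)
    (hsized : Set.Sized j (𝒞 : Set (Finset (Fin N)))) (hM : s.card + 1 ≤ 2 * j) :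
    𝒞.card ≤ (∂ 𝒞).card := by
  classical
  set e : {x // x ∈ s} ↪ Fin N := Function.Embedding.subtype _ with he
  set 𝒞₀ : Finset (Finset {x // x ∈ s}) := 𝒞.image (fun A => A.subtype (· ∈ s)) with h𝒞₀
  have hmapback : ∀ A ∈ 𝒞, (A.subtype (· ∈ s)).map e = A := by
    intro A hA
    rw [he, Finset.subtype_map, Finset.filter_true_of_mem (fun x hx => hsub A hA hx)]
  have himg : 𝒞₀.image (Finset.map e) = 𝒞 := by
    rw [h𝒞₀, Finset.image_image]
    calc 𝒞.image ((Finset.map e) ∘ (fun A => A.subtype (· ∈ s)))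
        = 𝒞.image id := Finset.image_congr (fun A hA => hmapback A hA)
      _ = 𝒞 := Finset.image_id
  have hcard0 : 𝒞₀.card = 𝒞.card := by
    apply le_antisymm (Finset.card_image_le)
    conv_lhs => rw [← himg]
    exact Finset.card_image_le
  have hsized0 : Set.Sized j (𝒞₀ : Set (Finset {x // x ∈ s})) := by
    intro A₀ hA₀
    obtain ⟨A, hA, rfl⟩ := Finset.mem_image.1 hA₀
    have := hmapback A hA
    have hc : ((A.subtype (· ∈ s)).map e).card = A.card := by rw [this]
    rw [Finset.card_map] at hc
    rw [hc]
    exact hsized hA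
  have hlym := Finset.card_mul_le_card_shadow_mul hsized0
  rw [Fintype.card_coe] at hlym
  have hshadoweq : (∂ 𝒞).card = (∂ 𝒞₀).card := by
    rw [← himg, shadow_image_map]
    exact Finset.card_image_of_injective _ (Finset.map_injective e)
  have h1 : s.card - j + 1 ≤ j := by omega
  have : 𝒞₀.card * j ≤ (∂ 𝒞₀).card * j :=
    le_trans hlym (Nat.mul_le_mul_left _ h1)
  rw [hshadoweq, ← hcard0]
  exact Nat.le_of_mul_le_mul_right this (by omega)

/-- Katona's intersecting-shadow theorem at the middle level, via Kruskal–Katona. -/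
lemma katona_middle {j : ℕ} (hj : 1 ≤ j) (H : Finset (Finset (Fin (2 * j))))
    (hsized : Set.Sized j (H : Set (Finset (Fin (2 * j)))))
    (hint : ∀ A ∈ H, ∀ B ∈ H, (A ∩ B).Nonempty) :
    H.card ≤ (∂ H).card := by
  classical
  -- `H` misses all complements of its members, so `#H ≤ C(2j-1, j)`.
  have hdisj : Disjoint H H.compls := by
    rw [Finset.disjoint_left]
    intro A hA hA'
    have hAc : Aᶜ ∈ H := Finset.mem_compls.1 hA'
    obtain ⟨x, hx⟩ := hint A hA Aᶜ hAc
    simp at hx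
  have hsizedc : Set.Sized j ((H.compls : Set (Finset (Fin (2 * j))))) := by
    intro A hA
    have hAc : Aᶜ ∈ H := Finset.mem_compls.1 (by exact_mod_cast hA)
    have := hsized hAc
    have h2 : Aᶜᶜ = A := compl_compl A
    have h3 : (Aᶜ)ᶜ.card = 2 * j - Aᶜ.card := by
      rw [Finset.card_compl]
      simp
    rw [h2] at h3
    rw [h3, this]
    omega
  have hsubP : H ∪ H.compls ⊆ Finset.powersetCard j Finset.univ := by
    intro A hA
    rcases Finset.mem_union.1 hA with h | h
    · exact Finset.mem_powersetCard.2 ⟨Finset.subset_univ _, hsized h⟩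
    · exact Finset.mem_powersetCard.2 ⟨Finset.subset_univ _, hsizedc (by exact_mod_cast h)⟩
  have hPcard : (Finset.powersetCard j (Finset.univ : Finset (Fin (2 * j)))).card
      = (2 * j).choose j := by
    rw [Finset.card_powersetCard]
    simp
  have hunion : H.card + H.compls.card = (H ∪ H.compls).card :=
    (Finset.card_union_of_disjoint hdisj).symm
  have hcc : H.compls.card = H.card := Finset.card_compls H
  have hP1 : (H ∪ H.compls).card ≤ (2 * j).choose j := by
    rw [← hPcard]; exact Finset.card_le_card hsubP
  have hhalf0 : 2 * H.card ≤ (2 * j).choose j := by omega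
  have hchoose2 : (2 * j).choose j = 2 * (2 * j - 1).choose j := by
    obtain ⟨i, rfl⟩ : ∃ i, j = i + 1 := ⟨j - 1, by omega⟩
    have hsymm : (2 * i + 1).choose i = (2 * i + 1).choose (i + 1) := by
      have h := Nat.choose_symm (show i + 1 ≤ 2 * i + 1 by omega)
      rwa [show 2 * i + 1 - (i + 1) = i from by omega] at h
    rw [show 2 * (i + 1) - 1 = 2 * i + 1 from by omega,
      show 2 * (i + 1) = (2 * i + 1) + 1 from by omega,
      Nat.choose_succ_succ (2 * i + 1) i]
    simp only [Nat.succ_eq_add_one]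
    omega
  have hHbound : H.card ≤ (2 * j - 1).choose j := by omega
  -- initial segment of the same size
  obtain ⟨𝒞, hinit, hcard, hsubC⟩ := exists_initSeg (2 * j) j H.card
    (by rw [hPcard]; omega)
  have hKK : (∂ 𝒞).card ≤ (∂ H).card := by
    have h := Finset.kruskal_katona hsized (le_of_eq hcard) hinit
    convert h using 2 <;> congr!
  -- the top element
  set T : Fin (2 * j) := ⟨2 * j - 1, by omega⟩ with hT
  -- every member of 𝒞 avoids T
  have havoid : ∀ A ∈ 𝒞, T ∉ A := by
    intro A hA hTA
    have hPsub : Finset.powersetCard j (Finset.univ.erase T) ⊆ 𝒞 := by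
      intro B hB
      obtain ⟨hBsub, hBj⟩ := Finset.mem_powersetCard.1 hB
      have hTB : T ∉ B := fun h => (Finset.mem_erase.1 (hBsub h)).1 rfl
      refine hinit.2 hA ⟨?_, hBj⟩
      rw [Finset.Colex.toColex_lt_toColex]
      constructor
      · rintro rfl; exact hTB hTA
      · intro a _ haA
        refine ⟨T, hTA, hTB, ?_⟩
        have : (a : ℕ) ≤ 2 * j - 1 := by omega
        exact this
    have hssub : Finset.powersetCard j (Finset.univ.erase T) ⊂ 𝒞 := by
      refine ⟨hPsub, fun hrev => ?_⟩
      have : A ∈ Finset.powersetCard j (Finset.univ.erase T) := hrev hA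
      exact (Finset.mem_erase.1 ((Finset.mem_powersetCard.1 this).1 hTA)).1 rfl
    have hcardP : (Finset.powersetCard j (Finset.univ.erase T)).card = (2 * j - 1).choose j := by
      rw [Finset.card_powersetCard, Finset.card_erase_of_mem (Finset.mem_univ _)]
      simp
    have := Finset.card_lt_card hssub
    rw [hcardP, hcard] at this
    omega
  have hsubT : ∀ A ∈ 𝒞, A ⊆ Finset.univ.erase T := by
    intro A hA x hx
    exact Finset.mem_erase.2 ⟨fun h => havoid A hA (h ▸ hx), Finset.mem_univ _⟩
  have hinitSized : Set.Sized j (𝒞 : Set (Finset (Fin (2 * j)))) := hinit.1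
  have hground : 𝒞.card ≤ (∂ 𝒞).card := by
    apply card_le_card_shadow_ground hj 𝒞 hsubT hinitSized
    rw [Finset.card_erase_of_mem (Finset.mem_univ _)]
    simp only [Finset.card_univ, Fintype.card_fin]
    omega
  omega

/-- Local LYM for the upper shadow, strictly below the middle. -/
lemma card_le_card_upShadow_of_lt {N j : ℕ} (G : Finset (Finset (Fin N)))
    (hsized : Set.Sized j (G : Set (Finset (Fin N)))) (h2j : 2 * j < N) :
    G.card ≤ (∂⁺ G).card := by
  classical
  have hjN : j ≤ N := by omega
  have hsizedc : Set.Sized (N - j) ((G.compls : Set (Finset (Fin N)))) := by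
    intro A hA
    have hAc : Aᶜ ∈ G := Finset.mem_compls.1 (by exact_mod_cast hA)
    have h1 := hsized hAc
    have h3 : (Aᶜ)ᶜ.card = N - Aᶜ.card := by
      rw [Finset.card_compl]; simp
    rw [compl_compl] at h3
    rw [h3, h1]
  have hlym := Finset.card_mul_le_card_shadow_mul hsizedc
  rw [Finset.shadow_compls, Finset.card_compls, Finset.card_compls] at hlym
  simp only [Fintype.card_fin] at hlym
  have hNNj : N - (N - j) + 1 = j + 1 := by omega
  rw [hNNj] at hlym
  have h2 : G.card * (j + 1) ≤ G.card * (N - j) :=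
    Nat.mul_le_mul_left _ (by omega)
  exact Nat.le_of_mul_le_mul_right (le_trans h2 hlym) (by omega)

/-- The upper-shadow version of Katona's theorem at the exact middle level. -/
lemma card_le_card_upShadow_middle {j : ℕ} (hj : 1 ≤ j) (G : Finset (Finset (Fin (2 * j))))
    (hsized : Set.Sized j (G : Set (Finset (Fin (2 * j)))))
    (hint : ∀ A ∈ G, ∀ B ∈ G, (A ∩ B).Nonempty) :
    G.card ≤ (∂⁺ G).card := by
  classical
  have hsizedc : Set.Sized j ((G.compls : Set (Finset (Fin (2 * j))))) := by
    intro A hA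
    have hAc : Aᶜ ∈ G := Finset.mem_compls.1 (by exact_mod_cast hA)
    have h1 := hsized hAc
    have h3 : (Aᶜ)ᶜ.card = 2 * j - Aᶜ.card := by
      rw [Finset.card_compl]; simp
    rw [compl_compl] at h3
    rw [h3, h1]
    omega
  have hintc : ∀ A ∈ G.compls, ∀ B ∈ G.compls, (A ∩ B).Nonempty := by
    intro A hA B hB
    have hAc : Aᶜ ∈ G := Finset.mem_compls.1 hA
    have hBc : Bᶜ ∈ G := Finset.mem_compls.1 hB
    have hABne := hint Aᶜ hAc Bᶜ hBc
    rw [← Finset.card_pos] at hABne ⊢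
    have hA' := hsizedc (by exact_mod_cast hA)
    have hB' := hsizedc (by exact_mod_cast hB)
    have hiu := Finset.card_inter_add_card_union Aᶜ Bᶜ
    have hiu2 := Finset.card_inter_add_card_union A B
    have h4 : (A ∪ B).card ≤ 2 * j := by
      have := Finset.card_le_univ (A ∪ B)
      simpa using this
    -- A ∩ B = (Aᶜ ∪ Bᶜ)ᶜ
    have h5 : A ∩ B = (Aᶜ ∪ Bᶜ)ᶜ := by
      rw [Finset.compl_union, compl_compl, compl_compl]
    have h6 : ((Aᶜ ∪ Bᶜ)ᶜ).card = 2 * j - (Aᶜ ∪ Bᶜ).card := by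
      rw [Finset.card_compl]; simp
    have h7 : Aᶜ.card = j := hsized hAc
    have h8 : Bᶜ.card = j := hsized hBc
    rw [h5, h6]
    omega
  have h := katona_middle hj G.compls hsizedc hintc
  rwa [Finset.shadow_compls, Finset.card_compls, Finset.card_compls] at h

section PushUp
variable {N : ℕ}

/-- Replace the sets of size `j` in `F` by their upper shadow. -/
def pushUp (F : Finset (Finset (Fin N))) (j : ℕ) : Finset (Finset (Fin N)) :=
  F.filter (fun A => A.card ≠ j) ∪ ∂⁺ (F.filter (fun A => A.card = j))

lemma pushUp_exists_subset {F : Finset (Finset (Fin N))} {j : ℕ} {X : Finset (Fin N)}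
    (hX : X ∈ pushUp F j) : ∃ A ∈ F, A ⊆ X := by
  rcases Finset.mem_union.1 hX with h | h
  · exact ⟨X, (Finset.mem_filter.1 h).1, Finset.Subset.refl X⟩
  · obtain ⟨A, hA, hAX, -⟩ := Finset.mem_upShadow_iff_exists_mem_card_add_one.1 h
    exact ⟨A, (Finset.mem_filter.1 hA).1, hAX⟩

lemma pushUp_card_mem {F : Finset (Finset (Fin N))} {j : ℕ} {X : Finset (Fin N)}
    (hlow : ∀ A ∈ F, j ≤ A.card) (hX : X ∈ pushUp F j) : j + 1 ≤ X.card := by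
  rcases Finset.mem_union.1 hX with h | h
  · obtain ⟨h1, h2⟩ := Finset.mem_filter.1 h
    have := hlow X h1
    omega
  · obtain ⟨A, hA, -, hcard⟩ := Finset.mem_upShadow_iff_exists_mem_card_add_one.1 h
    obtain ⟨-, h2⟩ := Finset.mem_filter.1 hA
    omega

lemma pushUp_card_mem_le {F : Finset (Finset (Fin N))} {j r : ℕ}
    (hhigh : ∀ A ∈ F, A.card ≤ r) (hjr : j < r) {X : Finset (Fin N)}
    (hX : X ∈ pushUp F j) : X.card ≤ r := by
  rcases Finset.mem_union.1 hX with h | h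
  · exact hhigh X (Finset.mem_filter.1 h).1
  · obtain ⟨A, hA, -, hcard⟩ := Finset.mem_upShadow_iff_exists_mem_card_add_one.1 h
    obtain ⟨-, h2⟩ := Finset.mem_filter.1 hA
    omega

lemma pushUp_inter {F : Finset (Finset (Fin N))} {j : ℕ}
    (hint : ∀ A ∈ F, ∀ B ∈ F, (A ∩ B).Nonempty) :
    ∀ X ∈ pushUp F j, ∀ Y ∈ pushUp F j, (X ∩ Y).Nonempty := by
  intro X hX Y hY
  obtain ⟨A, hA, hAX⟩ := pushUp_exists_subset hX
  obtain ⟨B, hB, hBY⟩ := pushUp_exists_subset hY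
  obtain ⟨x, hx⟩ := hint A hA B hB
  rw [Finset.mem_inter] at hx
  exact ⟨x, Finset.mem_inter.2 ⟨hAX hx.1, hBY hx.2⟩⟩

lemma pushUp_antichain {F : Finset (Finset (Fin N))} {j : ℕ}
    (hac : IsAntichain (· ⊆ ·) (F : Set (Finset (Fin N))))
    (hlow : ∀ A ∈ F, j ≤ A.card) :
    IsAntichain (· ⊆ ·) ((pushUp F j : Finset (Finset (Fin N))) : Set (Finset (Fin N))) := by
  intro X hX Y hY hne hsub
  rw [Finset.mem_coe] at hX hY
  rcases Finset.mem_union.1 hX with h1 | h1 <;> rcases Finset.mem_union.1 hY with h2 | h2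
  · exact hac (Finset.mem_coe.2 (Finset.mem_filter.1 h1).1)
      (Finset.mem_coe.2 (Finset.mem_filter.1 h2).1) hne hsub
  · -- X ∈ F (size > j), Y ∈ upShadow (size j+1) : X ⊆ Y forces X = Y
    obtain ⟨B, hB, hBY, hYcard⟩ := Finset.mem_upShadow_iff_exists_mem_card_add_one.1 h2
    obtain ⟨hXF, hXj⟩ := Finset.mem_filter.1 h1
    obtain ⟨-, hBj⟩ := Finset.mem_filter.1 hB
    have hXcard : j + 1 ≤ X.card := by have := hlow X hXF; omega
    exact hne (Finset.eq_of_subset_of_card_le hsub (by omega))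
  · -- X ∈ upShadow, Y ∈ F : A ⊆ X ⊆ Y with A, Y ∈ F
    obtain ⟨A, hA, hAX, hXcard⟩ := Finset.mem_upShadow_iff_exists_mem_card_add_one.1 h1
    obtain ⟨hAF, hAj⟩ := Finset.mem_filter.1 hA
    obtain ⟨hYF, hYj⟩ := Finset.mem_filter.1 h2
    have hAY : A ≠ Y := by
      intro h; exact hYj (h ▸ hAj)
    exact hac (Finset.mem_coe.2 hAF) (Finset.mem_coe.2 hYF) hAY (hAX.trans hsub)
  · obtain ⟨A, hA, -, hXcard⟩ := Finset.mem_upShadow_iff_exists_mem_card_add_one.1 h1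
    obtain ⟨B, hB, -, hYcard⟩ := Finset.mem_upShadow_iff_exists_mem_card_add_one.1 h2
    obtain ⟨-, hAj⟩ := Finset.mem_filter.1 hA
    obtain ⟨-, hBj⟩ := Finset.mem_filter.1 hB
    exact hne (Finset.eq_of_subset_of_card_le hsub (by omega))

lemma card_le_pushUp {F : Finset (Finset (Fin N))} {j : ℕ}
    (hac : IsAntichain (· ⊆ ·) (F : Set (Finset (Fin N))))
    (hsh : (F.filter (fun A => A.card = j)).card ≤ (∂⁺ (F.filter (fun A => A.card = j))).card) :
    F.card ≤ (pushUp F j).card := by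
  classical
  have hdisj : Disjoint (F.filter (fun A => A.card ≠ j)) (∂⁺ (F.filter (fun A => A.card = j))) := by
    rw [Finset.disjoint_left]
    intro X hX hX'
    obtain ⟨A, hA, hAX, hXcard⟩ := Finset.mem_upShadow_iff_exists_mem_card_add_one.1 hX'
    obtain ⟨hXF, hXj⟩ := Finset.mem_filter.1 hX
    obtain ⟨hAF, hAj⟩ := Finset.mem_filter.1 hA
    have hAXne : A ≠ X := by intro h; rw [h] at hAj; exact hXj hAj
    exact hac (Finset.mem_coe.2 hAF) (Finset.mem_coe.2 hXF) hAXne hAX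
  rw [pushUp, Finset.card_union_of_disjoint hdisj]
  have hsplit := Finset.card_filter_add_card_filter_not
    (s := F) (p := fun A => A.card = j)
  simp only [ne_eq] at hsplit ⊢
  omega

end PushUp

/-- Dispatch: the key shadow inequality for the filtered level below `(N+2)/2`. -/
lemma filter_card_le_upShadow {N j : ℕ} (F : Finset (Finset (Fin N)))
    (hint : ∀ A ∈ F, ∀ B ∈ F, (A ∩ B).Nonempty) (hjk : j < (N + 2) / 2) :
    (F.filter (fun A => A.card = j)).card ≤ (∂⁺ (F.filter (fun A => A.card = j))).card := by
  classical
  set G := F.filter (fun A => A.card = j) with hG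
  rcases G.eq_empty_or_nonempty with h | ⟨A, hA⟩
  · simp [h]
  have hsized : Set.Sized j (G : Set (Finset (Fin N))) := by
    intro B hB
    exact (Finset.mem_filter.1 (Finset.mem_coe.1 hB)).2
  have hGsub : G ⊆ F := Finset.filter_subset _ _
  have hintG : ∀ X ∈ G, ∀ Y ∈ G, (X ∩ Y).Nonempty := fun X hX Y hY =>
    hint X (hGsub hX) Y (hGsub hY)
  have hj1 : 1 ≤ j := by
    obtain ⟨x, hx⟩ := hintG A hA A hA
    rw [Finset.mem_inter] at hx
    have hAne : A.Nonempty := ⟨x, hx.1⟩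
    have := (Finset.mem_filter.1 hA).2
    have := Finset.card_pos.2 hAne
    omega
  have h2jN : 2 * j ≤ N := by omega
  rcases lt_or_eq_of_le h2jN with hlt | heq
  · exact card_le_card_upShadow_of_lt G hsized hlt
  · -- N = 2 * j
    subst heq
    exact card_le_card_upShadow_middle hj1 G hsized hintG

/-- Stage 2: pushing up an antichain with sizes in `[r - d, r]`, `2r ≤ N`. -/
lemma stage2 (N r : ℕ) (h2r : 2 * r ≤ N) :
    ∀ d (F : Finset (Finset (Fin N))), IsAntichain (· ⊆ ·) (F : Set (Finset (Fin N))) →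
      (∀ A ∈ F, r - d ≤ A.card) → (∀ A ∈ F, A.card ≤ r) → F.card ≤ N.choose r := by
  intro d
  induction d with
  | zero =>
    intro F hac hlow hhigh
    have hsized : Set.Sized r (F : Set (Finset (Fin N))) := by
      intro A hA
      have h1 := hlow A (by exact_mod_cast hA)
      have h2 := hhigh A (by exact_mod_cast hA)
      omega
    have := hsized.card_le
    simpa using this
  | succ d ih =>
    intro F hac hlow hhigh
    by_cases hdr : r ≤ d
    · exact ih F hac (fun A hA => by have := hlow A hA; omega) hhigh
    · set j := r - (d + 1) with hj
      have hjr : j < r := by omega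
      have hsizedj : Set.Sized j ((F.filter (fun A => A.card = j) : Finset (Finset (Fin N))) :
          Set (Finset (Fin N))) := by
        intro B hB
        exact (Finset.mem_filter.1 (Finset.mem_coe.1 hB)).2
      have hsh : (F.filter (fun A => A.card = j)).card ≤
          (∂⁺ (F.filter (fun A => A.card = j))).card :=
        card_le_card_upShadow_of_lt _ hsizedj (by omega)
      calc F.card ≤ (pushUp F j).card := card_le_pushUp hac hsh
        _ ≤ N.choose r := by
          apply ih (pushUp F j) (pushUp_antichain hac hlow)
          · intro A hA
            have := pushUp_card_mem hlow hA
            omega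
          · intro A hA
            exact pushUp_card_mem_le hhigh hjr hA

/-- Antichains are preserved by complementation. -/
lemma isAntichain_compls {N : ℕ} {F : Finset (Finset (Fin N))}
    (hac : IsAntichain (· ⊆ ·) (F : Set (Finset (Fin N)))) :
    IsAntichain (· ⊆ ·) ((F.compls : Finset (Finset (Fin N))) : Set (Finset (Fin N))) := by
  intro X hX Y hY hne hsub
  rw [Finset.mem_coe, Finset.mem_compls] at hX hY
  have hne' : Yᶜ ≠ Xᶜ := by
    intro h
    have h2 := congrArg compl h
    rw [compl_compl, compl_compl] at h2
    exact hne h2.symm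
  exact hac (Finset.mem_coe.2 hY) (Finset.mem_coe.2 hX) hne'
    (Finset.compl_subset_compl.2 hsub)

/-- Stage 1: pushing an intersecting antichain up to sizes `≥ k = (N+2)/2`. -/
lemma stage1 (N : ℕ) (hN : 1 ≤ N) :
    ∀ d (F : Finset (Finset (Fin N))), IsAntichain (· ⊆ ·) (F : Set (Finset (Fin N))) →
      (∀ A ∈ F, ∀ B ∈ F, (A ∩ B).Nonempty) →
      (∀ A ∈ F, (N + 2) / 2 - d ≤ A.card) → F.card ≤ N.choose ((N + 2) / 2) := by
  intro d
  induction d with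
  | zero =>
    intro F hac hint hlow
    set k := (N + 2) / 2 with hk
    have hkN : k ≤ N := by omega
    have hcompls := isAntichain_compls hac
    have hhigh : ∀ A ∈ F.compls, A.card ≤ N - k := by
      intro A hA
      have hAc : Aᶜ ∈ F := Finset.mem_compls.1 hA
      have h1 := hlow Aᶜ hAc
      have h3 : (Aᶜ)ᶜ.card = N - Aᶜ.card := by
        rw [Finset.card_compl]; simp
      rw [compl_compl] at h3
      omega
    have h2 := stage2 N (N - k) (by omega) (N - k) F.compls hcompls
      (fun A hA => by omega) hhigh
    rw [Finset.card_compls] at h2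
    have hsymm : N.choose (N - k) = N.choose k := Nat.choose_symm hkN
    omega
  | succ d ih =>
    intro F hac hint hlow
    by_cases hdk : (N + 2) / 2 ≤ d
    · exact ih F hac hint (fun A hA => by have := hlow A hA; omega)
    · set j := (N + 2) / 2 - (d + 1) with hj
      have hjk : j < (N + 2) / 2 := by omega
      have hsh := filter_card_le_upShadow F hint hjk
      calc F.card ≤ (pushUp F j).card := card_le_pushUp hac hsh
        _ ≤ N.choose ((N + 2) / 2) := by
          apply ih (pushUp F j) (pushUp_antichain hac (fun A hA => by have := hlow A hA; omega))
            (pushUp_inter hint)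
          intro A hA
          have := pushUp_card_mem (fun A hA => by have := hlow A hA; omega) hA
          omega

/-- **Milner's theorem** (t = 1): an intersecting antichain in `Fin N` has size at most
`C(N, ⌈(N+1)/2⌉)`. -/
theorem milner (N : ℕ) (F : Finset (Finset (Fin N)))
    (hac : IsAntichain (· ⊆ ·) (F : Set (Finset (Fin N))))
    (hint : ∀ A ∈ F, ∀ B ∈ F, (A ∩ B).Nonempty) :
    F.card ≤ N.choose ((N + 2) / 2) := by
  rcases Nat.eq_zero_or_pos N with h0 | hN
  · subst h0
    have hF : F = ∅ := by
      rcases F.eq_empty_or_nonempty with h | ⟨A, hA⟩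
      · exact h
      · obtain ⟨x, -⟩ := hint A hA A hA
        exact absurd x.2 (by omega)
    simp [hF]
  · exact stage1 N hN ((N + 2) / 2) F hac hint (fun A _ => by omega)

end QIAux



/-- Two partitions of `{1,…,n}` are qualitatively independent if every class of
one meets every class of the other. -/
def QIPart {n : ℕ} (P Q : Finpartition (Finset.univ : Finset (Fin n))) : Prop :=
  ∀ A ∈ P.parts, ∀ B ∈ Q.parts, (A ∩ B).Nonempty

/-- Vertices of `QI(n,2)`: 2-partitions of an `n`-set with both classes of size
at least 2. -/
def QIVertex (n k : ℕ) : Type :=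
  {P : Finpartition (Finset.univ : Finset (Fin n)) //
    P.parts.card = k ∧ ∀ A ∈ P.parts, k ≤ A.card}

/-- The qualitative independence graph. -/
def QIGraph (n k : ℕ) : SimpleGraph (QIVertex n k) :=
  SimpleGraph.fromRel fun P Q => QIPart P.1 Q.1

/-! ### Bridge between 2-partitions and set families -/

section Bridge

open Finset

/-- The 2-part partition `{S, univ \ S}`. -/
def pairPartition {n : ℕ} (S : Finset (Fin n)) (hne : S ≠ Finset.univ \ S)
    (h1 : S.Nonempty) (h2 : (Finset.univ \ S).Nonempty) :
    Finpartition (Finset.univ : Finset (Fin n)) where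
  parts := {S, Finset.univ \ S}
  supIndep := (Finset.supIndep_pair hne).2 Finset.disjoint_sdiff
  sup_parts := by
    rw [Finset.sup_insert, Finset.sup_singleton, id, id, Finset.sup_eq_union]
    exact Finset.union_sdiff_of_subset (Finset.subset_univ S)
  bot_notMem := by
    simp only [Finset.bot_eq_empty, Finset.mem_insert, Finset.mem_singleton]
    push_neg
    exact ⟨Ne.symm h1.ne_empty, Ne.symm h2.ne_empty⟩

end Bridge

namespace QIAux2

open Finset

variable {m : ℕ}

lemma qipart_symm {n : ℕ} {P Q : Finpartition (Finset.univ : Finset (Fin n))}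
    (h : QIPart P Q) : QIPart Q P := fun B hB A hA => by
  rw [Finset.inter_comm]; exact h A hA B hB

lemma exists_rep (v : QIVertex (m + 1) 2) :
    ∃ A : Finset (Fin (m + 1)), (0 : Fin (m + 1)) ∉ A ∧
      v.1.parts = {A, Finset.univ \ A} := by
  obtain ⟨A, B, hAB, hparts⟩ := Finset.card_eq_two.1 v.2.1
  have hAmem : A ∈ v.1.parts := by rw [hparts]; exact Finset.mem_insert_self _ _
  have hBmem : B ∈ v.1.parts := by rw [hparts]; simp
  have hdisj : Disjoint A B := v.1.disjoint hAmem hBmem hAB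
  have hunion : A ∪ B = Finset.univ := by
    have h := v.1.sup_parts
    rw [hparts, Finset.sup_insert, Finset.sup_singleton, id, id, Finset.sup_eq_union] at h
    exact h
  have hBeq : B = Finset.univ \ A := by
    ext x
    constructor
    · intro hx
      exact Finset.mem_sdiff.2 ⟨Finset.mem_univ _,
        fun hA' => Finset.disjoint_left.1 hdisj hA' hx⟩
    · intro hx
      obtain ⟨-, hxA⟩ := Finset.mem_sdiff.1 hx
      have hxu : x ∈ A ∪ B := by rw [hunion]; exact Finset.mem_univ x
      rcases Finset.mem_union.1 hxu with h | h
      · exact absurd h hxA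
      · exact h
  by_cases h0 : (0 : Fin (m + 1)) ∈ A
  · refine ⟨B, fun hB0 => Finset.disjoint_left.1 hdisj h0 hB0, ?_⟩
    have hA' : Finset.univ \ B = A := by
      rw [hBeq, Finset.sdiff_sdiff_self_left, Finset.univ_inter]
    rw [hparts, hA', Finset.pair_comm]
  · exact ⟨A, h0, by rw [hparts, hBeq]⟩

noncomputable def bigRep (v : QIVertex (m + 1) 2) : Finset (Fin (m + 1)) :=
  (exists_rep v).choose

lemma bigRep_not_mem (v : QIVertex (m + 1) 2) : (0 : Fin (m + 1)) ∉ bigRep v :=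
  (exists_rep v).choose_spec.1

lemma bigRep_parts (v : QIVertex (m + 1) 2) :
    v.1.parts = {bigRep v, Finset.univ \ bigRep v} :=
  (exists_rep v).choose_spec.2

lemma bigRep_mem_parts (v : QIVertex (m + 1) 2) : bigRep v ∈ v.1.parts := by
  rw [bigRep_parts]; exact Finset.mem_insert_self _ _

lemma compl_bigRep_mem_parts (v : QIVertex (m + 1) 2) :
    Finset.univ \ bigRep v ∈ v.1.parts := by
  rw [bigRep_parts]; simp

lemma bigRep_nonempty (v : QIVertex (m + 1) 2) : (bigRep v).Nonempty :=
  v.1.nonempty_of_mem_parts (bigRep_mem_parts v)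

noncomputable def smallRep (v : QIVertex (m + 1) 2) : Finset (Fin m) :=
  (bigRep v).preimage Fin.succ ((Fin.succ_injective m).injOn)

lemma mem_smallRep {v : QIVertex (m + 1) 2} {y : Fin m} :
    y ∈ smallRep v ↔ y.succ ∈ bigRep v := Finset.mem_preimage

lemma smallRep_injective : Function.Injective (smallRep (m := m)) := by
  intro u v h
  have hbig : bigRep u = bigRep v := by
    ext x
    rcases eq_or_ne x 0 with rfl | hx
    · constructor
      · intro hc; exact absurd hc (bigRep_not_mem u)
      · intro hc; exact absurd hc (bigRep_not_mem v)
    · obtain ⟨y, rfl⟩ := Fin.eq_succ_of_ne_zero hx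
      constructor
      · intro hm'
        exact mem_smallRep.1 (h ▸ mem_smallRep.2 hm')
      · intro hm'
        exact mem_smallRep.1 (h.symm ▸ mem_smallRep.2 hm')
  have hP : u.1 = v.1 := Finpartition.ext (by rw [bigRep_parts, bigRep_parts, hbig])
  exact Subtype.ext hP

lemma smallRep_nonempty (v : QIVertex (m + 1) 2) : (smallRep v).Nonempty := by
  obtain ⟨x, hx⟩ := bigRep_nonempty v
  have hx0 : x ≠ 0 := fun h => bigRep_not_mem v (h ▸ hx)
  obtain ⟨y, rfl⟩ := Fin.eq_succ_of_ne_zero hx0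
  exact ⟨y, mem_smallRep.2 hx⟩

lemma smallRep_inter {u v : QIVertex (m + 1) 2} (h : QIPart u.1 v.1) :
    (smallRep u ∩ smallRep v).Nonempty := by
  obtain ⟨x, hx⟩ := h (bigRep u) (bigRep_mem_parts u) (bigRep v) (bigRep_mem_parts v)
  rw [Finset.mem_inter] at hx
  have hx0 : x ≠ 0 := fun h0 => bigRep_not_mem u (h0 ▸ hx.1)
  obtain ⟨y, rfl⟩ := Fin.eq_succ_of_ne_zero hx0
  exact ⟨y, Finset.mem_inter.2 ⟨mem_smallRep.2 hx.1, mem_smallRep.2 hx.2⟩⟩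

lemma smallRep_not_subset {u v : QIVertex (m + 1) 2} (h : QIPart u.1 v.1) :
    ¬ smallRep u ⊆ smallRep v := by
  intro hsub
  obtain ⟨x, hx⟩ := h (bigRep u) (bigRep_mem_parts u)
    (Finset.univ \ bigRep v) (compl_bigRep_mem_parts v)
  rw [Finset.mem_inter] at hx
  obtain ⟨hxu, hxv⟩ := hx
  obtain ⟨-, hxv'⟩ := Finset.mem_sdiff.1 hxv
  have hx0 : x ≠ 0 := fun h0 => bigRep_not_mem u (h0 ▸ hxu)
  obtain ⟨y, rfl⟩ := Fin.eq_succ_of_ne_zero hx0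
  exact hxv' (mem_smallRep.1 (hsub (mem_smallRep.2 hxu)))

/-- The vertex corresponding to a half-sized subset avoiding `0`. -/
def vertexOf (hm : 3 ≤ m) (S : Finset (Fin (m + 1)))
    (hS : S ∈ Finset.powersetCard ((m + 2) / 2) (Finset.univ.erase (0 : Fin (m + 1)))) :
    QIVertex (m + 1) 2 := by
  have hsub : S ⊆ Finset.univ.erase (0 : Fin (m + 1)) := (Finset.mem_powersetCard.1 hS).1
  have hcard : S.card = (m + 2) / 2 := (Finset.mem_powersetCard.1 hS).2
  have h0 : (0 : Fin (m + 1)) ∉ S := fun h => (Finset.mem_erase.1 (hsub h)).1 rfl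
  have h0' : (0 : Fin (m + 1)) ∈ Finset.univ \ S :=
    Finset.mem_sdiff.2 ⟨Finset.mem_univ _, h0⟩
  have hne : S ≠ Finset.univ \ S := fun h => h0 (h ▸ h0')
  have hcardc : (Finset.univ \ S).card = (m + 1) - (m + 2) / 2 := by
    rw [Finset.card_sdiff_of_subset (Finset.subset_univ S), hcard]
    simp
  refine ⟨pairPartition S hne ?_ ?_, ?_, ?_⟩
  · rw [← Finset.card_pos, hcard]; omega
  · rw [← Finset.card_pos, hcardc]; omega
  · exact Finset.card_pair hne
  · intro A hA
    rcases Finset.mem_insert.1 hA with rfl | hA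
    · rw [hcard]; omega
    · rw [Finset.mem_singleton.1 hA, hcardc]; omega

lemma vertexOf_parts (hm : 3 ≤ m) (S : Finset (Fin (m + 1))) (hS) :
    (vertexOf hm S hS).1.parts = {S, Finset.univ \ S} := rfl

end QIAux2

/-- For `n ≥ 4`, the maximum clique size of `QI(n,2)` equals `C(n−1, ⌊n/2⌋−1)`. -/
theorem cliqueNum_QIGraph_two (n : ℕ) (hn : 4 ≤ n) :
    IsGreatest {t | ∃ s : Finset (QIVertex n 2), (QIGraph n 2).IsNClique t s}
      ((n - 1).choose (n / 2 - 1)) := by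
  classical
  open Finset QIAux QIAux2 in
  obtain ⟨m, rfl⟩ : ∃ m, n = m + 1 := ⟨n - 1, by omega⟩
  have hm : 3 ≤ m := by omega
  have harith : (m + 1 - 1).choose ((m + 1) / 2 - 1) = m.choose ((m + 2) / 2) := by
    have h1 : m + 1 - 1 = m := by omega
    have h2 : (m + 1) / 2 - 1 = m - (m + 2) / 2 := by omega
    rw [h1, h2, Nat.choose_symm (by omega)]
  constructor
  · -- membership: an explicit clique of the right size
    rw [Set.mem_setOf_eq]
    set c := (m + 2) / 2 with hc
    set 𝒮 := Finset.powersetCard c (Finset.univ.erase (0 : Fin (m + 1))) with h𝒮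
    have hinj : ∀ X Y : {S // S ∈ 𝒮}, vertexOf hm X.1 X.2 = vertexOf hm Y.1 Y.2 → X = Y := by
      rintro ⟨S, hS⟩ ⟨T, hT⟩ h
      have hparts : ({S, Finset.univ \ S} : Finset (Finset (Fin (m + 1))))
          = {T, Finset.univ \ T} := by
        rw [← vertexOf_parts hm S hS, ← vertexOf_parts hm T hT, h]
      have h0S : (0 : Fin (m + 1)) ∉ S :=
        fun h' => (Finset.mem_erase.1 ((Finset.mem_powersetCard.1 hS).1 h')).1 rfl
      have h0T : (0 : Fin (m + 1)) ∉ T :=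
        fun h' => (Finset.mem_erase.1 ((Finset.mem_powersetCard.1 hT).1 h')).1 rfl
      have hSmem : S ∈ ({T, Finset.univ \ T} : Finset (Finset (Fin (m + 1)))) := by
        rw [← hparts]; exact Finset.mem_insert_self _ _
      rcases Finset.mem_insert.1 hSmem with h' | h'
      · exact Subtype.ext h'
      · rw [Finset.mem_singleton] at h'
        exfalso
        have : (0 : Fin (m + 1)) ∈ S := by
          rw [h']; exact Finset.mem_sdiff.2 ⟨Finset.mem_univ _, h0T⟩
        exact h0S this
    refine ⟨𝒮.attach.image (fun X => vertexOf hm X.1 X.2), ?_⟩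
    rw [SimpleGraph.isNClique_iff]
    constructor
    · -- clique
      intro x hx y hy hne
      rw [Finset.mem_coe, Finset.mem_image] at hx hy
      obtain ⟨X, -, rfl⟩ := hx
      obtain ⟨Y, -, rfl⟩ := hy
      have hXY : X ≠ Y := fun h => hne (by rw [h])
      have hST : X.1 ≠ Y.1 := fun h => hXY (Subtype.ext h)
      have hsubS : X.1 ⊆ Finset.univ.erase (0 : Fin (m + 1)) :=
        (Finset.mem_powersetCard.1 X.2).1
      have hsubT : Y.1 ⊆ Finset.univ.erase (0 : Fin (m + 1)) :=
        (Finset.mem_powersetCard.1 Y.2).1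
      have hcardS : X.1.card = c := (Finset.mem_powersetCard.1 X.2).2
      have hcardT : Y.1.card = c := (Finset.mem_powersetCard.1 Y.2).2
      have h0S : (0 : Fin (m + 1)) ∉ X.1 := fun h' => (Finset.mem_erase.1 (hsubS h')).1 rfl
      have h0T : (0 : Fin (m + 1)) ∉ Y.1 := fun h' => (Finset.mem_erase.1 (hsubT h')).1 rfl
      show (QIGraph (m + 1) 2).Adj _ _
      rw [QIGraph, SimpleGraph.fromRel_adj]
      refine ⟨hne, Or.inl ?_⟩
      intro A hA B hB
      rw [vertexOf_parts hm X.1 X.2] at hA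
      rw [vertexOf_parts hm Y.1 Y.2] at hB
      have hiu := Finset.card_inter_add_card_union X.1 Y.1
      have huu : (X.1 ∪ Y.1).card ≤ m := by
        have h1 : X.1 ∪ Y.1 ⊆ Finset.univ.erase (0 : Fin (m + 1)) :=
          Finset.union_subset hsubS hsubT
        have h2 := Finset.card_le_card h1
        rwa [Finset.card_erase_of_mem (Finset.mem_univ _), Finset.card_univ,
          Fintype.card_fin, Nat.add_sub_cancel] at h2
      have hAB : (A = X.1 ∨ A = Finset.univ \ X.1) ∧ (B = Y.1 ∨ B = Finset.univ \ Y.1) := by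
        constructor
        · rcases Finset.mem_insert.1 hA with h | h
          · exact Or.inl h
          · exact Or.inr (Finset.mem_singleton.1 h)
        · rcases Finset.mem_insert.1 hB with h | h
          · exact Or.inl h
          · exact Or.inr (Finset.mem_singleton.1 h)
      obtain ⟨rfl | rfl, rfl | rfl⟩ := hAB
      · rw [← Finset.card_pos]
        omega
      · have hnsub : ¬ X.1 ⊆ Y.1 := fun hsub =>
          hST (Finset.eq_of_subset_of_card_le hsub (by omega))
        obtain ⟨x, hxS, hxT⟩ := Finset.not_subset.1 hnsub
        exact ⟨x, Finset.mem_inter.2 ⟨hxS, Finset.mem_sdiff.2 ⟨Finset.mem_univ _, hxT⟩⟩⟩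
      · have hnsub : ¬ Y.1 ⊆ X.1 := fun hsub =>
          hST (Finset.eq_of_subset_of_card_le hsub (by omega)).symm
        obtain ⟨x, hxT, hxS⟩ := Finset.not_subset.1 hnsub
        exact ⟨x, Finset.mem_inter.2 ⟨Finset.mem_sdiff.2 ⟨Finset.mem_univ _, hxS⟩, hxT⟩⟩
      · exact ⟨0, Finset.mem_inter.2 ⟨Finset.mem_sdiff.2 ⟨Finset.mem_univ _, h0S⟩,
          Finset.mem_sdiff.2 ⟨Finset.mem_univ _, h0T⟩⟩⟩
    · -- cardinality
      rw [Finset.card_image_of_injOn (fun X _ Y _ h => hinj X Y h), Finset.card_attach,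
        h𝒮, Finset.card_powersetCard,
        Finset.card_erase_of_mem (Finset.mem_univ _), Finset.card_univ, Fintype.card_fin,
        Nat.add_sub_cancel]
      rw [show (m + 1) / 2 - 1 = m - c from by omega, Nat.choose_symm (show c ≤ m by omega)]
  · -- upper bound
    rintro t ⟨s, hs⟩
    rw [SimpleGraph.isNClique_iff] at hs
    obtain ⟨hclique, hcard⟩ := hs
    set F : Finset (Finset (Fin m)) := s.image smallRep with hF
    have hFcard : F.card = s.card := Finset.card_image_of_injective _ smallRep_injective
    have hQI : ∀ u ∈ s, ∀ v ∈ s, u ≠ v → QIPart u.1 v.1 := by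
      intro u hu v hv huv
      have hadj := hclique (Finset.mem_coe.2 hu) (Finset.mem_coe.2 hv) huv
      rw [QIGraph, SimpleGraph.fromRel_adj] at hadj
      exact hadj.2.elim id qipart_symm
    have hac : IsAntichain (· ⊆ ·) (F : Set (Finset (Fin m))) := by
      intro X hX Y hY hne hsub
      rw [Finset.mem_coe, hF, Finset.mem_image] at hX hY
      obtain ⟨u, hu, rfl⟩ := hX
      obtain ⟨v, hv, rfl⟩ := hY
      have huv : u ≠ v := fun h => hne (by rw [h])
      exact smallRep_not_subset (hQI u hu v hv huv) hsub
    have hint : ∀ X ∈ F, ∀ Y ∈ F, (X ∩ Y).Nonempty := by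
      intro X hX Y hY
      rw [hF, Finset.mem_image] at hX hY
      obtain ⟨u, hu, rfl⟩ := hX
      obtain ⟨v, hv, rfl⟩ := hY
      rcases eq_or_ne u v with rfl | huv
      · rw [Finset.inter_self]
        exact smallRep_nonempty u
      · exact smallRep_inter (hQI u hu v hv huv)
    have hmil := QIAux.milner m F hac hint
    rw [harith]
    omega
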